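/- Fix integers n, f, d with 2f + 2 < n and d ≥ 1. There exists a constant C > 0, depending only on n and f, such that the following holds. Let W_1, …, W_n be vectors in ℝ^d and let B ⊆ {1,…,n} be a set of Byzantine indices with |B| ≤ f; for each index i let N(i) be a set of n − f − 2 indices j ≠ i minimizing ‖W_i − W_j‖ and let s(i) = Σ_{j∈N(i)} ‖W_i − W_j‖². If k ∈ B satisfies s(k) ≤ s(i) for every correct index i ∉ B, then ‖W_k‖ ≤ C · Σ_{j∉B} ‖W_j‖. -/
import Mathlib


open Finset

/-- The multi-Krum score of index `i`: the sum of squared distances to its chosen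
neighborhood `N i`. -/
noncomputable def krumScore {d n : ℕ} (W : Fin n → EuclideanSpace ℝ (Fin d))
    (N : Fin n → Finset (Fin n)) (i : Fin n) : ℝ :=
  ∑ j ∈ N i, ‖W i - W j‖ ^ 2

/-- there is a constant `C > 0` depending only on `n` and `f` such that any
Byzantine vector `W k` whose multi-Krum score is at most the score of every correct index
has norm bounded by `C` times the sum of the norms of the correct vectors. -/
theorem byzantine_norm_bounded (n f : ℕ) (hnf : 2 * f + 2 < n) :
    ∃ C : ℝ, 0 < C ∧
      ∀ (d : ℕ), 1 ≤ d →
      ∀ (W : Fin n → EuclideanSpace ℝ (Fin d))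
        (B : Finset (Fin n)), B.card ≤ f →
      ∀ (N : Fin n → Finset (Fin n)),
        (∀ i, (N i).card = n - f - 2) →
        (∀ i, i ∉ N i) →
        (∀ i, ∀ j ∈ N i, ∀ l, l ∉ N i → l ≠ i → ‖W i - W j‖ ≤ ‖W i - W l‖) →
      ∀ k ∈ B, (∀ i ∉ B, krumScore W N k ≤ krumScore W N i) →
        ‖W k‖ ≤ C * ∑ j ∈ Bᶜ, ‖W j‖ := by
  refine ⟨n, Nat.cast_pos.mpr (by omega), ?_⟩
  intro d hd W B hB N hcard hself hnear k hk hscore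
  set S := ∑ j ∈ Bᶜ, ‖W j‖ with hSdef
  have hS0 : 0 ≤ S := Finset.sum_nonneg fun j _ => norm_nonneg _
  have hsingle : ∀ j ∈ Bᶜ, ‖W j‖ ≤ S :=
    fun j hj => Finset.single_le_sum (fun j _ => norm_nonneg _) hj
  have hpair : ∀ i ∈ Bᶜ, ∀ l ∈ Bᶜ, i ≠ l → ‖W i‖ + ‖W l‖ ≤ S := by
    intro i hi l hl hil
    have hsub : ({i, l} : Finset (Fin n)) ⊆ Bᶜ := by
      intro x hx
      simp only [Finset.mem_insert, Finset.mem_singleton] at hx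
      rcases hx with rfl | rfl <;> assumption
    calc ‖W i‖ + ‖W l‖ = ∑ j ∈ ({i, l} : Finset (Fin n)), ‖W j‖ := by
          rw [Finset.sum_pair hil]
      _ ≤ S := Finset.sum_le_sum_of_subset_of_nonneg hsub fun j _ _ => norm_nonneg _
  have hcompl : n - f ≤ Bᶜ.card := by
    rw [Finset.card_compl, Fintype.card_fin]; omega
  obtain ⟨i, hi⟩ : Bᶜ.Nonempty := Finset.card_pos.mp (by omega)
  have hiB : i ∉ B := Finset.mem_compl.mp hi
  -- find a correct l outside N i ∪ {i}
  have hexl : (Bᶜ \ insert i (N i)).Nonempty := by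
    apply Finset.card_pos.mp
    have h1 : (insert i (N i)).card ≤ n - f - 2 + 1 := by
      calc (insert i (N i)).card ≤ (N i).card + 1 := Finset.card_insert_le _ _
        _ = n - f - 2 + 1 := by rw [hcard]
    have h2 := Finset.le_card_sdiff (insert i (N i)) Bᶜ
    omega
  obtain ⟨l, hl⟩ := hexl
  rw [Finset.mem_sdiff, Finset.mem_insert] at hl
  push_neg at hl
  obtain ⟨hlB, hlne, hlN⟩ := hl
  -- bound the score of the correct index i
  have hscorei : krumScore W N i ≤ ((n - f - 2 : ℕ) : ℝ) * S ^ 2 := by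
    unfold krumScore
    calc ∑ j ∈ N i, ‖W i - W j‖ ^ 2 ≤ ∑ _j ∈ N i, S ^ 2 := by
          apply Finset.sum_le_sum
          intro j hj
          have h1 : ‖W i - W j‖ ≤ ‖W i - W l‖ := hnear i j hj l hlN hlne
          have h2 : ‖W i - W l‖ ≤ ‖W i‖ + ‖W l‖ := norm_sub_le _ _
          have h3 : ‖W i‖ + ‖W l‖ ≤ S := hpair i hi l hlB (fun h => hlne h.symm)
          exact pow_le_pow_left₀ (norm_nonneg _) (h1.trans (h2.trans h3)) 2
      _ = ((n - f - 2 : ℕ) : ℝ) * S ^ 2 := by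
          rw [Finset.sum_const, hcard, nsmul_eq_mul]
  -- a correct neighbor of k
  have hexj : (N k \ B).Nonempty := by
    apply Finset.card_pos.mp
    have h1 := Finset.le_card_sdiff B (N k)
    have h2 := hcard k
    omega
  obtain ⟨j0, hj0⟩ := hexj
  rw [Finset.mem_sdiff] at hj0
  have hj0c : j0 ∈ Bᶜ := Finset.mem_compl.mpr hj0.2
  have hterm : ‖W k - W j0‖ ^ 2 ≤ krumScore W N k := by
    unfold krumScore
    exact Finset.single_le_sum (f := fun j => ‖W k - W j‖ ^ 2) (fun j _ => sq_nonneg _) hj0.1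
  have hm1 : (1 : ℝ) ≤ ((n - f - 2 : ℕ) : ℝ) := by
    exact_mod_cast Nat.one_le_iff_ne_zero.mpr (by omega)
  have hchain : ‖W k - W j0‖ ^ 2 ≤ (((n - f - 2 : ℕ) : ℝ) * S) ^ 2 := by
    calc ‖W k - W j0‖ ^ 2 ≤ krumScore W N k := hterm
      _ ≤ krumScore W N i := hscore i hiB
      _ ≤ ((n - f - 2 : ℕ) : ℝ) * S ^ 2 := hscorei
      _ ≤ (((n - f - 2 : ℕ) : ℝ) * S) ^ 2 := by nlinarith [sq_nonneg S]
  have hdist : ‖W k - W j0‖ ≤ ((n - f - 2 : ℕ) : ℝ) * S := by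
    have hm : (0 : ℝ) ≤ ((n - f - 2 : ℕ) : ℝ) * S :=
      mul_nonneg (Nat.cast_nonneg _) hS0
    exact (pow_le_pow_iff_left₀ (norm_nonneg _) hm (by norm_num)).mp hchain
  have hnk : ((n - f - 2 : ℕ) : ℝ) + 1 ≤ (n : ℝ) := by
    have : (n - f - 2) + 1 ≤ n := by omega
    exact_mod_cast this
  calc ‖W k‖ = ‖W j0 + (W k - W j0)‖ := by rw [add_sub_cancel]
    _ ≤ ‖W j0‖ + ‖W k - W j0‖ := norm_add_le _ _
    _ ≤ S + ((n - f - 2 : ℕ) : ℝ) * S := add_le_add (hsingle j0 hj0c) hdist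
    _ = (((n - f - 2 : ℕ) : ℝ) + 1) * S := by ring
    _ ≤ (n : ℝ) * S := mul_le_mul_of_nonneg_right hnk hS0
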